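/- arXiv:2105.03205 — 4 statements merged into one kernel-verified Lean document; each statement's English description precedes it below -/
import Mathlib

section
/- Let k be a positive integer and P : Matrix (Fin k) (Fin k × Fin k) ℝ a product matrix, with multiplication μ_P(x,y) := P.mulVec (x ⊗ᵥ y). Then μ_P is associative (μ_P(μ_P(x,y), z) = μ_P(x, μ_P(y,z)) for all x, y, z) if and only if P * (P ⊗ₖ I_k) = P * (I_k ⊗ₖ P), where ⊗ₖ is the Kronecker product of matrices and the index identifications Fin k × (Fin k × Fin k) ≃ (Fin k × Fin k) × Fin k are the obvious ones (this is the semi-tensor product identity P² = P ⋉ (I_k ⊗ P)). -/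
lemma lhs_eval (k : ℕ) (P : Matrix (Fin k) (Fin k × Fin k) ℝ) (x y z : Fin k → ℝ) (i : Fin k) :
    P.mulVec (fun p : Fin k × Fin k =>
        P.mulVec (fun q : Fin k × Fin k => x q.1 * y q.2) p.1 * z p.2) i
    = ∑ a, ∑ b, ∑ c, (∑ j, P i (j, c) * P j (a, b)) * (x a * y b * z c) := by
  simp only [Matrix.mulVec, dotProduct, Fintype.sum_prod_type, Finset.sum_mul,
    Finset.mul_sum]
  -- order on LHS: j c a b ; target: a b c j
  rw [Finset.sum_comm]                                     -- c j a b
  conv_lhs => enter [2, c]; rw [Finset.sum_comm]                  -- c a j b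
  conv_lhs => enter [2, c, 2, a]; rw [Finset.sum_comm]           -- c a b j
  rw [Finset.sum_comm]                                     -- a c b j
  conv_lhs => enter [2, a]; rw [Finset.sum_comm]                  -- a b c j
  exact Finset.sum_congr rfl fun a _ => Finset.sum_congr rfl fun b _ =>
    Finset.sum_congr rfl fun c _ => Finset.sum_congr rfl fun j _ => by ring

lemma rhs_eval (k : ℕ) (P : Matrix (Fin k) (Fin k × Fin k) ℝ) (x y z : Fin k → ℝ) (i : Fin k) :
    P.mulVec (fun p : Fin k × Fin k =>
        x p.1 * P.mulVec (fun q : Fin k × Fin k => y q.1 * z q.2) p.2) i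
    = ∑ a, ∑ b, ∑ c, (∑ j, P i (a, j) * P j (b, c)) * (x a * y b * z c) := by
  simp only [Matrix.mulVec, dotProduct, Fintype.sum_prod_type, Finset.sum_mul,
    Finset.mul_sum]
  -- order on LHS: a j b c ; target: a b c j
  conv_lhs => enter [2, a]; rw [Finset.sum_comm]                  -- a b j c
  conv_lhs => enter [2, a, 2, b]; rw [Finset.sum_comm]           -- a b c j
  exact Finset.sum_congr rfl fun a _ => Finset.sum_congr rfl fun b _ =>
    Finset.sum_congr rfl fun c _ => Finset.sum_congr rfl fun j _ => by ring

lemma lmat_eval (k : ℕ) (P : Matrix (Fin k) (Fin k × Fin k) ℝ) (i a b c : Fin k) :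
    ((P * (Matrix.kronecker P (1 : Matrix (Fin k) (Fin k) ℝ))).submatrix id
      (fun q : Fin k × (Fin k × Fin k) => ((q.1, q.2.1), q.2.2))) i (a, (b, c))
    = ∑ j, P i (j, c) * P j (a, b) := by
  simp [Matrix.mul_apply, Matrix.kroneckerMap_apply, Matrix.one_apply, Fintype.sum_prod_type,
    mul_ite, Finset.sum_ite_eq, mul_comm]

lemma rmat_eval (k : ℕ) (P : Matrix (Fin k) (Fin k × Fin k) ℝ) (i a b c : Fin k) :
    (P * (Matrix.kronecker (1 : Matrix (Fin k) (Fin k) ℝ) P)) i (a, (b, c))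
    = ∑ j, P i (a, j) * P j (b, c) := by
  rw [Matrix.mul_apply, Fintype.sum_prod_type]
  rw [Finset.sum_comm]
  simp [Matrix.one_apply, Finset.sum_ite_eq]

/-- Associativity criterion: `μ_P` is associative iff `P ⋉ (P ⊗ I_k) = P ⋉ (I_k ⊗ P)`
(the STP identity `P² = P ⋉ (I_k ⊗ P)`), with the obvious index identification. -/
theorem productMatrix_associative_iff (k : ℕ) (hk : 0 < k)
    (P : Matrix (Fin k) (Fin k × Fin k) ℝ) :
    ((∀ x y z : Fin k → ℝ,
        P.mulVec (fun p : Fin k × Fin k =>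
          P.mulVec (fun q : Fin k × Fin k => x q.1 * y q.2) p.1 * z p.2) =
        P.mulVec (fun p : Fin k × Fin k =>
          x p.1 * P.mulVec (fun q : Fin k × Fin k => y q.1 * z q.2) p.2)) ↔
      (P * (Matrix.kronecker P (1 : Matrix (Fin k) (Fin k) ℝ))).submatrix id
          (fun q : Fin k × (Fin k × Fin k) => ((q.1, q.2.1), q.2.2)) =
        P * (Matrix.kronecker (1 : Matrix (Fin k) (Fin k) ℝ) P)) := by
  constructor
  · intro h
    ext i q
    obtain ⟨a, b, c⟩ := q
    have := congrFun (h (Pi.single a 1) (Pi.single b 1) (Pi.single c 1)) i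
    rw [lhs_eval, rhs_eval] at this
    rw [lmat_eval, rmat_eval]
    simpa [Pi.single_apply, mul_ite, ite_mul, Finset.sum_ite_eq'] using this
  · intro h x y z
    funext i
    rw [lhs_eval, rhs_eval]
    refine Finset.sum_congr rfl fun a _ => Finset.sum_congr rfl fun b _ =>
      Finset.sum_congr rfl fun c _ => ?_
    have := congrFun (congrFun h i) (a, (b, c))
    rw [lmat_eval, rmat_eval] at this
    rw [this]
end

section
/- Let A be a commutative ring that is an ℝ-algebra with finrank ℝ A = 2. Then A is isomorphic as an ℝ-algebra to exactly one of: the dual numbers DualNumber ℝ (= ℝ[X]/(X²)), the hyperbolic numbers ℝ × ℝ (with componentwise operations), or the complex numbers ℂ. Moreover no two of these three algebras are ℝ-algebra isomorphic to each other. -/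
open Module

/-- Algebra hom from ℝ × ℝ determined by an element squaring to 1. -/
noncomputable def hypHom {A : Type} [CommRing A] [Algebra ℝ A] (e : A) (he : e * e = 1) :
    (ℝ × ℝ) →ₐ[ℝ] A where
  toFun p := (((p.1 + p.2) / 2) • (1 : A)) + (((p.1 - p.2) / 2) • e)
  map_one' := by norm_num
  map_mul' p q := by
    simp only [Prod.fst_mul, Prod.snd_mul, mul_add, add_mul, smul_mul_smul_comm,
      one_mul, mul_one, he]
    match_scalars <;> ring
  map_zero' := by norm_num
  map_add' p q := by
    simp only [Prod.fst_add, Prod.snd_add]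
    match_scalars <;> ring
  commutes' r := by
    have hr1 : ((algebraMap ℝ (ℝ × ℝ)) r).1 = r := rfl
    have hr2 : ((algebraMap ℝ (ℝ × ℝ)) r).2 = r := rfl
    simp only [hr1, hr2]
    rw [Algebra.algebraMap_eq_smul_one]
    match_scalars <;> ring

/-- Classification of 2-dimensional PHAs: every commutative 2-dimensional ℝ-algebra
is ℝ-algebra isomorphic to exactly one of the dual numbers, the hyperbolic numbers
`ℝ × ℝ`, or the complex numbers; moreover these three are pairwise non-isomorphic. -/
theorem two_dimensional_pha_classification (A : Type) [CommRing A] [Algebra ℝ A]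
    (h : Module.finrank ℝ A = 2) :
    (Nonempty (A ≃ₐ[ℝ] DualNumber ℝ) ∨ Nonempty (A ≃ₐ[ℝ] (ℝ × ℝ)) ∨
      Nonempty (A ≃ₐ[ℝ] ℂ)) ∧
    IsEmpty (DualNumber ℝ ≃ₐ[ℝ] (ℝ × ℝ)) ∧
    IsEmpty (DualNumber ℝ ≃ₐ[ℝ] ℂ) ∧
    IsEmpty ((ℝ × ℝ) ≃ₐ[ℝ] ℂ) := by
  haveI : Module.Finite ℝ A := Module.finite_of_finrank_eq_succ h
  haveI : Nontrivial A := Module.nontrivial_of_finrank_eq_succ h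
  have hone : (1 : A) ≠ 0 := one_ne_zero
  -- find x outside span {1}
  obtain ⟨x, hx⟩ : ∃ x : A, x ∉ Submodule.span ℝ ({1} : Set A) := by
    have hlt : Submodule.span ℝ ({1} : Set A) < ⊤ := by
      apply span_lt_top_of_card_lt_finrank
      simp [h]
    obtain ⟨x, -, hx⟩ := SetLike.exists_of_lt hlt
    exact ⟨x, hx⟩
  -- key independence fact
  have indep : ∀ a b : ℝ, a • (1 : A) + b • x = 0 → a = 0 ∧ b = 0 := by
    intro a b hab
    rcases eq_or_ne b 0 with hb | hb
    · subst hb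
      rw [zero_smul, add_zero, smul_eq_zero] at hab
      exact ⟨hab.resolve_right hone, rfl⟩
    · exfalso
      have hbx : b • x = -(a • (1 : A)) :=
        eq_neg_of_add_eq_zero_left (by rwa [add_comm] at hab)
      rw [← neg_smul] at hbx
      have hxeq : x = (b⁻¹ * (-a)) • (1 : A) := by
        rw [mul_smul, ← hbx, smul_smul, inv_mul_cancel₀ hb, one_smul]
      exact hx (hxeq ▸ Submodule.smul_mem _ _ (Submodule.mem_span_singleton_self _))
  -- span fact
  have li : LinearIndependent ℝ ![x, 1] := by
    rw [linearIndependent_fin2]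
    refine ⟨hone, fun a ha => hx ?_⟩
    simp only [Matrix.cons_val_one, Matrix.head_cons, Matrix.cons_val_zero] at ha
    rw [← ha]
    exact Submodule.smul_mem _ _ (Submodule.mem_span_singleton_self _)
  have hspan : Submodule.span ℝ ({x, 1} : Set A) = ⊤ := by
    have hB := (basisOfLinearIndependentOfCardEqFinrank li (by simp [h])).span_eq
    rw [coe_basisOfLinearIndependentOfCardEqFinrank] at hB
    rwa [show Set.range ![x, (1 : A)] = {x, 1} by
      rw [Matrix.range_cons, Matrix.range_cons_empty]; rfl] at hB
  obtain ⟨b, a, hxx⟩ : ∃ b a : ℝ, b • x + a • (1 : A) = x * x :=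
    Submodule.mem_span_pair.mp (hspan ▸ Submodule.mem_top)
  -- the shifted element
  set y : A := x - (b / 2) • (1 : A) with hy
  have indep' : ∀ a' b' : ℝ, a' • (1 : A) + b' • y = 0 → a' = 0 ∧ b' = 0 := by
    intro a' b' hab
    have h1 : (a' - b' * (b / 2)) • (1 : A) + b' • x = 0 := by
      rw [← hab, hy]
      match_scalars <;> ring
    obtain ⟨h1, h2⟩ := indep _ _ h1
    refine ⟨?_, h2⟩
    rw [h2] at h1
    linarith
  set c : ℝ := a + b ^ 2 / 4 with hc
  have hyy : y * y = c • (1 : A) := by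
    have hexp : y * y = x * x - b • x + (b ^ 2 / 4) • (1 : A) := by
      rw [hy, mul_sub, sub_mul, sub_mul]
      simp only [smul_mul_assoc, mul_smul_comm, mul_one, one_mul]
      match_scalars <;> ring
    rw [hexp, ← hxx, hc]
    match_scalars <;> ring
  -- a general bijectivity criterion
  have bij : ∀ (B' : Type) [inst : CommRing B'] [inst2 : Algebra ℝ B'],
      Module.finrank ℝ B' = 2 → ∀ f : B' →ₐ[ℝ] A, Function.Injective f →
      Function.Bijective f := by
    intro B' _ _ hB' f hf
    refine ⟨hf, ?_⟩
    haveI : Module.Finite ℝ B' := Module.finite_of_finrank_eq_succ hB'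
    exact (LinearMap.injective_iff_surjective_of_finrank_eq_finrank
      (f := f.toLinearMap) (by rw [hB', h])).mp hf
  constructor
  · -- classification
    rcases lt_trichotomy c 0 with hcneg | hczero | hcpos
    · -- complex case
      right; right
      set t : ℝ := Real.sqrt (-c) with ht
      have ht0 : t ≠ 0 := ne_of_gt (Real.sqrt_pos.mpr (by linarith))
      set i : A := (1 / t) • y with hi
      have hii : i * i = -1 := by
        rw [hi, smul_mul_smul_comm, hyy, smul_smul]
        have htc : 1 / t * (1 / t) * c = -1 := by
          have htt : t * t = -c := Real.mul_self_sqrt (by linarith)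
          field_simp
          nlinarith [htt]
        rw [htc, neg_smul, one_smul]
      let f : ℂ →ₐ[ℝ] A := Complex.liftAux i hii
      have hinj : Function.Injective f := f.toRingHom.injective
      exact ⟨(AlgEquiv.ofBijective f
        (bij ℂ (by simp [Complex.finrank_real_complex]) f hinj)).symm⟩
    · -- dual number case
      left
      have hyy0 : y * y = 0 := by rw [hyy, hczero, zero_smul]
      let f : (DualNumber ℝ) →ₐ[ℝ] A :=
        DualNumber.lift ⟨(Algebra.ofId ℝ A, y), hyy0, fun r => Commute.all _ _⟩
      have key : ∀ z : DualNumber ℝ, f z = z.fst • (1 : A) + z.snd • y := by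
        intro z
        show DualNumber.lift _ z = _
        rw [DualNumber.lift_apply_apply]
        simp only [Algebra.ofId_apply, Algebra.algebraMap_eq_smul_one, smul_mul_assoc, one_mul]
      have hinj : Function.Injective f := by
        intro p q hpq
        have h1 : (p.fst - q.fst) • (1 : A) + (p.snd - q.snd) • y = 0 := by
          have e1 : (p.fst - q.fst) • (1 : A) + (p.snd - q.snd) • y
              = (p.fst • (1 : A) + p.snd • y) - (q.fst • (1 : A) + q.snd • y) := by
            match_scalars <;> ring
          rw [e1, ← key p, ← key q, hpq, sub_self]
        obtain ⟨e1, e2⟩ := indep' _ _ h1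
        exact TrivSqZeroExt.ext (by linarith [sub_eq_zero.mp e1]; ) (sub_eq_zero.mp e2)
      exact ⟨(AlgEquiv.ofBijective f (bij _ (by
        show Module.finrank ℝ (ℝ × ℝ) = 2
        simp [Module.finrank_prod]) f hinj)).symm⟩
    · -- hyperbolic case
      right; left
      set t : ℝ := Real.sqrt c with ht
      have ht0 : t ≠ 0 := ne_of_gt (Real.sqrt_pos.mpr (by linarith))
      set e : A := (1 / t) • y with he'
      have hee : e * e = 1 := by
        rw [he', smul_mul_smul_comm, hyy, smul_smul]
        have htc : 1 / t * (1 / t) * c = 1 := by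
          have htt : t * t = c := Real.mul_self_sqrt (by linarith)
          field_simp
          nlinarith [htt]
        rw [htc, one_smul]
      have indepE : ∀ a' b' : ℝ, a' • (1 : A) + b' • e = 0 → a' = 0 ∧ b' = 0 := by
        intro a' b' hab
        rw [he', smul_smul] at hab
        obtain ⟨h1, h2⟩ := indep' _ _ hab
        refine ⟨h1, ?_⟩
        rcases mul_eq_zero.mp h2 with h3 | h3
        · exact h3
        · exact absurd h3 (by simp [ht0])
      let f := hypHom e hee
      have key : ∀ p : ℝ × ℝ, f p = (((p.1 + p.2) / 2) • (1 : A)) + (((p.1 - p.2) / 2) • e) :=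
        fun p => rfl
      have hinj : Function.Injective f := by
        intro p q hpq
        have h1 : ((p.1 + p.2 - q.1 - q.2) / 2) • (1 : A)
            + ((p.1 - p.2 - q.1 + q.2) / 2) • e = 0 := by
          have e1 : ((p.1 + p.2 - q.1 - q.2) / 2) • (1 : A)
              + ((p.1 - p.2 - q.1 + q.2) / 2) • e
              = ((((p.1 + p.2) / 2) • (1 : A)) + (((p.1 - p.2) / 2) • e))
                - ((((q.1 + q.2) / 2) • (1 : A)) + (((q.1 - q.2) / 2) • e)) := by
            match_scalars <;> ring
          rw [e1, ← key p, ← key q, hpq, sub_self]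
        obtain ⟨e1, e2⟩ := indepE _ _ h1
        have := p.1; have := p.2
        ext
        · linarith
        · linarith
      exact ⟨(AlgEquiv.ofBijective f
        (bij _ (by simp [Module.finrank_prod]) f hinj)).symm⟩
  · refine ⟨⟨fun f => ?_⟩, ⟨fun f => ?_⟩, ⟨fun f => ?_⟩⟩
    · have hsq : f DualNumber.eps * f DualNumber.eps = 0 := by
        rw [← map_mul, DualNumber.eps_mul_eps, map_zero]
      have h0 : f DualNumber.eps = 0 := by
        have h1 := mul_self_eq_zero.mp (congrArg Prod.fst hsq)
        have h2 := mul_self_eq_zero.mp (congrArg Prod.snd hsq)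
        exact Prod.ext h1 h2
      have heq : (DualNumber.eps : DualNumber ℝ) = 0 := f.injective (by rw [h0, map_zero])
      exact (one_ne_zero : (1 : ℝ) ≠ 0) (by simpa using congrArg TrivSqZeroExt.snd heq)
    · have hsq : f DualNumber.eps * f DualNumber.eps = 0 := by
        rw [← map_mul, DualNumber.eps_mul_eps, map_zero]
      have h0 : f DualNumber.eps = 0 := mul_self_eq_zero.mp hsq
      have heq : (DualNumber.eps : DualNumber ℝ) = 0 := f.injective (by rw [h0, map_zero])
      exact (one_ne_zero : (1 : ℝ) ≠ 0) (by simpa using congrArg TrivSqZeroExt.snd heq)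
    · have hsq : f (1, 0) * f (0, 1) = 0 := by
        rw [← map_mul]
        norm_num
      rcases mul_eq_zero.mp hsq with h0 | h0
      · have heq : ((1 : ℝ), (0 : ℝ)) = (0, 0) := f.injective (by rw [h0]; exact (map_zero f).symm)
        simpa using congrArg Prod.fst heq
      · have heq : ((0 : ℝ), (1 : ℝ)) = (0, 0) := f.injective (by rw [h0]; exact (map_zero f).symm)
        simpa using congrArg Prod.snd heq
end

section
/- Let a b c d e f p q r : ℝ and define the product matrix P : Matrix (Fin 3) (Fin 3 × Fin 3) ℝ of a commutative unital 3-dimensional algebra by: μ(e_0, x) = μ(x, e_0) = x for all x (e_0 is the unit), μ(e_1, e_1) = (a, b, c), μ(e_1, e_2) = μ(e_2, e_1) = (d, e, f), μ(e_2, e_2) = (p, q, r), where μ = μ_P is the multiplication defined by P and vectors are written in coordinates with respect to the standard basis e_0, e_1, e_2. Then μ_P is associative if and only if a = c*e + f² − b*f − c*r, d = c*q − e*f, and p = e² + f*q − b*q − e*r. -/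
set_option maxHeartbeats 2000000


/-- Associativity condition for triternions: the commutative unital 3-dimensional
algebra with `i₁² = (a,b,c)`, `i₁ i₂ = i₂ i₁ = (d,e,f)`, `i₂² = (p,q,r)` is
associative iff `a = ce + f² − bf − cr`, `d = cq − ef`, `p = e² + fq − bq − er`. -/
theorem triternion_associative_iff (a b c d e f p q r : ℝ)
    (P : Matrix (Fin 3) (Fin 3 × Fin 3) ℝ)
    (hP : P = Matrix.of fun (s : Fin 3) (pr : Fin 3 × Fin 3) =>
      (![![![(1 : ℝ), 0, 0], ![0, 1, 0], ![0, 0, 1]],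
         ![![(0 : ℝ), 1, 0], ![a, b, c], ![d, e, f]],
         ![![(0 : ℝ), 0, 1], ![d, e, f], ![p, q, r]]]) pr.1 pr.2 s) :
    ((∀ x y z : Fin 3 → ℝ,
        P.mulVec (fun pr : Fin 3 × Fin 3 =>
          P.mulVec (fun qr : Fin 3 × Fin 3 => x qr.1 * y qr.2) pr.1 * z pr.2) =
        P.mulVec (fun pr : Fin 3 × Fin 3 =>
          x pr.1 * P.mulVec (fun qr : Fin 3 × Fin 3 => y qr.1 * z qr.2) pr.2)) ↔
      (a = c * e + f ^ 2 - b * f - c * r ∧ d = c * q - e * f ∧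
        p = e ^ 2 + f * q - b * q - e * r)) := by
  subst hP
  constructor
  · intro h
    have h1 := congrFun (h ![0,1,0] ![0,1,0] ![0,0,1]) 1
    have h2 := congrFun (h ![0,1,0] ![0,1,0] ![0,0,1]) 2
    have h3 := congrFun (h ![0,0,1] ![0,0,1] ![0,1,0]) 1
    simp [Matrix.mulVec, dotProduct, Fintype.sum_prod_type,
      Fin.sum_univ_three] at h1 h2 h3
    refine ⟨by linarith, by linarith, by linarith⟩
  · rintro ⟨ha, hd, hp⟩
    subst ha; subst hd; subst hp
    intro x y z
    funext i
    fin_cases i <;>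
      simp [Matrix.mulVec, dotProduct, Fintype.sum_prod_type,
        Fin.sum_univ_three, Matrix.vecHead, Matrix.vecTail] <;> ring
end

section
/- For x₀ x₁ x₂ x₃ : ℝ, the quantity (x₀² − x₂²)² + (x₁² − x₃²)² + 2(x₀x₁ + x₂x₃)² + 2(x₀x₃ + x₁x₂)² equals 0 if and only if (x₀ = x₂ and x₁ = −x₃) or (x₀ = −x₂ and x₁ = x₃). Hence the zero set of the algebra A₃ is {(x₀,x₁,x₂,x₃) ∈ ℝ⁴ : (x₀ = x₂ ∧ x₁ = −x₃) ∨ (x₀ = −x₂ ∧ x₁ = x₃)}. -/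
/-- Zero set of the 4-dimensional PHA `A₃`: its characteristic function vanishes iff
`(x₀ = x₂ ∧ x₁ = −x₃)` or `(x₀ = −x₂ ∧ x₁ = x₃)`. -/
theorem A3_zero_set (x₀ x₁ x₂ x₃ : ℝ) :
    (x₀ ^ 2 - x₂ ^ 2) ^ 2 + (x₁ ^ 2 - x₃ ^ 2) ^ 2 +
        2 * (x₀ * x₁ + x₂ * x₃) ^ 2 + 2 * (x₀ * x₃ + x₁ * x₂) ^ 2 = 0 ↔
      ((x₀ = x₂ ∧ x₁ = -x₃) ∨ (x₀ = -x₂ ∧ x₁ = x₃)) := by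
  have hfac : (x₀ ^ 2 - x₂ ^ 2) ^ 2 + (x₁ ^ 2 - x₃ ^ 2) ^ 2 +
        2 * (x₀ * x₁ + x₂ * x₃) ^ 2 + 2 * (x₀ * x₃ + x₁ * x₂) ^ 2
      = ((x₀ - x₂) ^ 2 + (x₁ + x₃) ^ 2) * ((x₀ + x₂) ^ 2 + (x₁ - x₃) ^ 2) := by
    ring
  rw [hfac, mul_eq_zero]
  constructor
  · rintro (h | h)
    · left
      constructor
      · nlinarith [sq_nonneg (x₀ - x₂), sq_nonneg (x₁ + x₃)]
      · nlinarith [sq_nonneg (x₀ - x₂), sq_nonneg (x₁ + x₃)]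
    · right
      constructor
      · nlinarith [sq_nonneg (x₀ + x₂), sq_nonneg (x₁ - x₃)]
      · nlinarith [sq_nonneg (x₀ + x₂), sq_nonneg (x₁ - x₃)]
  · rintro (⟨h1, h2⟩ | ⟨h1, h2⟩)
    · left; rw [h1, h2]; ring
    · right; rw [h1, h2]; ring
end
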